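/- For q ≥ 1, the polynomial G_q(x) = ∫₀ˣ P_{q-1}(t) dt satisfies G_q(x) = (1/(q(q-1))) x(x-1) P'_{q-1}(x) for q ≥ 2. -/

import Mathlib

open Polynomial

/-- The shifted Legendre polynomial on `[0,1]`, `P_q(x) = (1/q!) dᵠ/dxᵠ [xᵠ(x-1)ᵠ]`. -/
noncomputable def legP (q : ℕ) : Polynomial ℝ :=
  (q.factorial : ℝ)⁻¹ • (Polynomial.derivative^[q] (Polynomial.X ^ q * (Polynomial.X - 1) ^ q))

/-- `G_q(x) = ∫₀ˣ P_{q-1}(t) dt`. -/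
noncomputable def legG (q : ℕ) (x : ℝ) : ℝ :=
  ∫ t in (0:ℝ)..x, (legP (q - 1)).eval t

-- Lemma 1: (X^2-X) * f' = r(2X-1) f  for f = X^r (X-1)^r, r = m+1
lemma lem1 (m : ℕ) :
    (X^2 - X) * derivative ((X:ℝ[X])^(m+1) * (X-1)^(m+1)) =
      C ((m:ℝ)+1) * (2*X-1) * ((X:ℝ[X])^(m+1) * (X-1)^(m+1)) := by
  have h1 : derivative ((X:ℝ[X])^(m+1)) = C ((m:ℝ)+1) * X^m := by
    simp [derivative_X_pow]
  have h2 : derivative (((X:ℝ[X])-1)^(m+1)) = C ((m:ℝ)+1) * (X-1)^m := by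
    simp [derivative_pow]
  rw [derivative_mul, h1, h2, pow_succ (X:ℝ[X]) m, pow_succ ((X:ℝ[X])-1) m]
  ring

lemma lem2 (m : ℕ) (n : ℕ) :
    (X^2 - X) * derivative^[n+2] ((X:ℝ[X])^(m+1) * (X-1)^(m+1)) =
      C (((m:ℝ)+1)-((n:ℝ)+1)) * (2*X-1) * derivative^[n+1] ((X:ℝ[X])^(m+1) * (X-1)^(m+1))
      + C (((n:ℝ)+1)*(2*((m:ℝ)+1)-(n:ℝ))) * derivative^[n] ((X:ℝ[X])^(m+1) * (X-1)^(m+1)) := by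
  induction n with
  | zero =>
    have h := congrArg derivative (lem1 m)
    push_cast at h ⊢
    simp only [derivative_mul, derivative_sub, derivative_X_pow, derivative_X, derivative_C,
      derivative_one, derivative_ofNat, C_add, C_sub, C_mul, C_1, map_ofNat,
      C_0, map_zero, Nat.cast_add, Nat.cast_one, Nat.cast_ofNat, Nat.add_sub_cancel, derivative_add, Function.iterate_succ_apply', Function.iterate_zero_apply,
      Function.iterate_one] at h ⊢
    linear_combination h
  | succ k ih =>
    have h := congrArg derivative ih
    push_cast at h ⊢
    simp only [derivative_mul, derivative_sub, derivative_add, derivative_X_pow, derivative_X,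
      derivative_C, derivative_one, derivative_ofNat, C_add, C_sub, C_mul, C_1, map_ofNat,
      C_0, map_zero, Nat.cast_add, Nat.cast_one, Nat.cast_ofNat, Nat.add_sub_cancel, Function.iterate_succ_apply'] at h ⊢
    linear_combination h

lemma lem3 (m : ℕ) :
    derivative ((X^2 - X) * derivative^[m+2] ((X:ℝ[X])^(m+1) * (X-1)^(m+1))) =
      C (((m:ℝ)+1)*((m:ℝ)+2)) * derivative^[m+1] ((X:ℝ[X])^(m+1) * (X-1)^(m+1)) := by
  have h := congrArg derivative (lem2 m m)
  simp only [sub_self, map_zero, zero_mul, zero_add] at h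
  rw [h]
  rw [derivative_C_mul, Function.iterate_succ_apply']
  ring_nf

lemma deriv_legP (m : ℕ) :
    derivative ((X^2 - X) * derivative (legP (m+1))) =
      C (((m:ℝ)+1)*((m:ℝ)+2)) * legP (m+1) := by
  unfold legP
  rw [derivative_smul, mul_smul_comm, derivative_smul,
    ← Function.iterate_succ_apply' derivative (m+1) ((X:ℝ[X])^(m+1) * (X-1)^(m+1)),
    lem3 m, mul_smul_comm]


theorem legG_eq_xxm1_deriv (q : ℕ) (hq : 2 ≤ q) (x : ℝ) :
    legG q x = (1 / ((q : ℝ) * ((q : ℝ) - 1))) *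
      (x * (x - 1) * (Polynomial.derivative (legP (q - 1))).eval x) := by
  obtain ⟨m, rfl⟩ := Nat.exists_eq_add_of_le hq
  have hq1 : 2 + m - 1 = m + 1 := by omega
  have ha : (((m:ℝ)+1)*((m:ℝ)+2)) ≠ 0 := by positivity
  set Q : ℝ[X] := C (((m:ℝ)+1)*((m:ℝ)+2))⁻¹ * ((X^2 - X) * derivative (legP (m+1))) with hQ
  have hdQ : derivative Q = legP (m+1) := by
    rw [hQ, derivative_C_mul, deriv_legP m, ← mul_assoc, ← C_mul, inv_mul_cancel₀ ha, C_1, one_mul]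
  have hint : legG (2+m) x = Q.eval x - Q.eval 0 := by
    rw [legG, hq1, ← hdQ]
    exact intervalIntegral.integral_eq_sub_of_hasDerivAt
      (fun t _ => Q.hasDerivAt t) ((Polynomial.continuous _).intervalIntegrable 0 x)
  rw [hint, hq1]
  simp only [hQ, eval_mul, eval_C, eval_sub, eval_pow, eval_X]
  have h2 : ((2+m : ℕ) : ℝ) = (m:ℝ)+2 := by push_cast; ring
  have key : ((m:ℝ)+2) * (((m:ℝ)+2)-1) = ((m:ℝ)+1)*((m:ℝ)+2) := by ring
  rw [h2, key]
  field_simp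
  ring
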